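/- Let A, Ã_k ∈ ℝ^{n×m} with Ã_k = P̃_k A for an orthogonal projection P̃_k, and α > 0. Then ‖(AAᵀ + αI)(Ã_k Ã_kᵀ + αI)⁻¹ − I‖ ≤ 2α⁻¹ ‖A‖ ‖A − Ã_k‖ in spectral norm. -/

import Mathlib

open Matrix
open scoped RealInnerProductSpace

/-- Moore–Penrose pseudoinverse predicate (the four Penrose conditions). -/
def IsMP {p q : ℕ} (A : Matrix (Fin p) (Fin q) ℝ) (X : Matrix (Fin q) (Fin p) ℝ) : Prop :=
  A * X * A = A ∧ X * A * X = X ∧ (A * X)ᵀ = A * X ∧ (X * A)ᵀ = X * A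

/-- spectral (operator) norm of a matrix, induced by Euclidean vector norms. -/
noncomputable def specNorm {p q : ℕ} (A : Matrix (Fin p) (Fin q) ℝ) : ℝ :=
  ‖LinearMap.toContinuousLinearMap (Matrix.toEuclideanLin A)‖

/-- Euclidean norm of a vector. -/
noncomputable def enorm {p : ℕ} (x : Fin p → ℝ) : ℝ :=
  ‖(WithLp.equiv 2 (Fin p → ℝ)).symm x‖

theorem Matrix.isHermitian_transpose_mul_self {p q : ℕ} (A : Matrix (Fin p) (Fin q) ℝ) :
    (Aᵀ * A).IsHermitian := by
  simpa using Matrix.isHermitian_conjTranspose_mul_self A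

/-- the `i`-th largest singular value (0-indexed) of a real matrix. -/
noncomputable def sv {p q : ℕ} (A : Matrix (Fin p) (Fin q) ℝ) (i : Fin q) : ℝ :=
  Real.sqrt (((Matrix.isHermitian_transpose_mul_self A).eigenvalues ∘
    Tuple.sort (Matrix.isHermitian_transpose_mul_self A).eigenvalues) i.rev)

noncomputable def mclm {p q : ℕ} (M : Matrix (Fin p) (Fin q) ℝ) :
    EuclideanSpace ℝ (Fin q) →L[ℝ] EuclideanSpace ℝ (Fin p) :=
  LinearMap.toContinuousLinearMap (Matrix.toEuclideanLin M)

lemma specNorm_eq {p q : ℕ} (M : Matrix (Fin p) (Fin q) ℝ) : specNorm M = ‖mclm M‖ := rfl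

lemma mclm_mul {p q r : ℕ} (M : Matrix (Fin p) (Fin q) ℝ) (N : Matrix (Fin q) (Fin r) ℝ) :
    mclm (M * N) = (mclm M).comp (mclm N) := by
  refine ContinuousLinearMap.ext fun x => ?_
  simp [mclm, Matrix.toEuclideanLin_apply, Matrix.mulVec_mulVec]

lemma mclm_one {p : ℕ} : mclm (1 : Matrix (Fin p) (Fin p) ℝ) = ContinuousLinearMap.id ℝ _ := by
  refine ContinuousLinearMap.ext fun x => ?_
  simp [mclm, Matrix.toEuclideanLin_apply]

lemma mclm_add {p q : ℕ} (M N : Matrix (Fin p) (Fin q) ℝ) :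
    mclm (M + N) = mclm M + mclm N := by
  unfold mclm; rw [map_add, map_add]

lemma mclm_smul {p q : ℕ} (c : ℝ) (M : Matrix (Fin p) (Fin q) ℝ) :
    mclm (c • M) = c • mclm M := by
  unfold mclm; rw [_root_.map_smul, _root_.map_smul]

lemma mclm_transpose {p q : ℕ} (M : Matrix (Fin p) (Fin q) ℝ) :
    mclm Mᵀ = ContinuousLinearMap.adjoint (mclm M) := by
  rw [mclm, mclm, ← Matrix.conjTranspose_eq_transpose_of_trivial,
    Matrix.toEuclideanLin_conjTranspose_eq_adjoint,
    LinearMap.adjoint_toContinuousLinearMap]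

lemma specNorm_transpose {p q : ℕ} (M : Matrix (Fin p) (Fin q) ℝ) :
    specNorm Mᵀ = specNorm M := by
  rw [specNorm_eq, specNorm_eq, mclm_transpose]
  exact ContinuousLinearMap.adjoint.norm_map (mclm M)

lemma specNorm_nonneg {p q : ℕ} (M : Matrix (Fin p) (Fin q) ℝ) : 0 ≤ specNorm M :=
  norm_nonneg _

lemma specNorm_mul_le {p q r : ℕ} (M : Matrix (Fin p) (Fin q) ℝ)
    (N : Matrix (Fin q) (Fin r) ℝ) : specNorm (M * N) ≤ specNorm M * specNorm N := by
  rw [specNorm_eq, specNorm_eq, specNorm_eq, mclm_mul]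
  exact ContinuousLinearMap.opNorm_comp_le _ _

lemma specNorm_add_le {p q : ℕ} (M N : Matrix (Fin p) (Fin q) ℝ) :
    specNorm (M + N) ≤ specNorm M + specNorm N := by
  rw [specNorm_eq, specNorm_eq, specNorm_eq, mclm_add]
  exact norm_add_le _ _

lemma inner_mclm_nonneg {p : ℕ} {M : Matrix (Fin p) (Fin p) ℝ} (hM : M.PosSemidef)
    (x : EuclideanSpace ℝ (Fin p)) : 0 ≤ ⟪x, mclm M x⟫ := by
  have h := hM.re_dotProduct_nonneg (WithLp.equiv 2 (Fin p → ℝ) x)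
  simpa [mclm, Matrix.toEuclideanLin_apply, PiLp.inner_apply, dotProduct, mulVec,
    RCLike.re_to_real, mul_comm] using h

lemma smul_one_posDef {p : ℕ} {α : ℝ} (hα : 0 < α) :
    (α • (1 : Matrix (Fin p) (Fin p) ℝ)).PosDef := by
  constructor
  · simp [Matrix.IsHermitian]
  · exact (Matrix.PosDef.one.smul hα).2

lemma specNorm_inv_le {p : ℕ} {M : Matrix (Fin p) (Fin p) ℝ} (hM : M.PosSemidef)
    {α : ℝ} (hα : 0 < α) :
    specNorm (M + α • (1 : Matrix (Fin p) (Fin p) ℝ))⁻¹ ≤ α⁻¹ := by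
  set B := M + α • (1 : Matrix (Fin p) (Fin p) ℝ) with hB
  have hBpd : B.PosDef := Matrix.PosDef.posSemidef_add hM (smul_one_posDef hα)
  have hdet : IsUnit B.det := (Matrix.isUnit_iff_isUnit_det B).mp hBpd.isUnit
  have hinv : B * B⁻¹ = 1 := Matrix.mul_nonsing_inv B hdet
  rw [specNorm_eq]
  refine ContinuousLinearMap.opNorm_le_bound _ (by positivity) fun x => ?_
  set y := mclm B⁻¹ x with hy
  have hBy : mclm B y = x := by
    have h1 := congrArg mclm hinv
    rw [mclm_mul, mclm_one] at h1
    exact DFunLike.congr_fun h1 x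
  have key : α * ‖y‖ ^ 2 ≤ ⟪y, x⟫ := by
    have hsplit : ⟪y, mclm B y⟫ = ⟪y, mclm M y⟫ + α * ⟪y, y⟫ := by
      rw [hB, mclm_add, mclm_smul, mclm_one]
      simp [inner_add_right, inner_smul_right]
    rw [← hBy, hsplit, real_inner_self_eq_norm_sq]
    have := inner_mclm_nonneg hM y
    linarith
  have hcs : ⟪y, x⟫ ≤ ‖y‖ * ‖x‖ := real_inner_le_norm y x
  rcases eq_or_lt_of_le (norm_nonneg y) with h0 | h0
  · rw [← h0]; positivity
  · have h3 : α * ‖y‖ ≤ ‖x‖ := by nlinarith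
    calc ‖y‖ = α⁻¹ * (α * ‖y‖) := by field_simp
      _ ≤ α⁻¹ * ‖x‖ := mul_le_mul_of_nonneg_left h3 (by positivity)

lemma specNorm_proj_le_one {p : ℕ} {P : Matrix (Fin p) (Fin p) ℝ}
    (hPsym : Pᵀ = P) (hPidem : P * P = P) : specNorm P ≤ 1 := by
  rw [specNorm_eq]
  refine ContinuousLinearMap.opNorm_le_bound _ one_pos.le fun x => ?_
  have hadj : ContinuousLinearMap.adjoint (mclm P) = mclm P := by
    rw [← mclm_transpose, hPsym]
  have hPP : mclm P (mclm P x) = mclm P x := by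
    have h := congrArg mclm hPidem
    rw [mclm_mul] at h
    exact DFunLike.congr_fun h x
  have h1 := ContinuousLinearMap.adjoint_inner_right (mclm P) x (mclm P x)
  rw [hadj, hPP] at h1
  have h2 : ‖mclm P x‖ ^ 2 ≤ ‖x‖ * ‖mclm P x‖ := by
    rw [← real_inner_self_eq_norm_sq, ← h1]
    exact real_inner_le_norm x (mclm P x)
  rcases eq_or_lt_of_le (norm_nonneg (mclm P x)) with h0 | h0
  · rw [← h0]; positivity
  · nlinarith

/-- `‖(AAᵀ + αI)(ÃₖÃₖᵀ + αI)⁻¹ − I‖ ≤ 2α⁻¹‖A‖‖A − Ãₖ‖`. -/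
theorem stmt14 {n m : ℕ} (A Ak : Matrix (Fin n) (Fin m) ℝ) (P : Matrix (Fin n) (Fin n) ℝ)
    (hPsym : Pᵀ = P) (hPidem : P * P = P) (hAk : Ak = P * A) (α : ℝ) (hα : 0 < α) :
    specNorm ((A * Aᵀ + α • (1 : Matrix (Fin n) (Fin n) ℝ))
        * (Ak * Akᵀ + α • (1 : Matrix (Fin n) (Fin n) ℝ))⁻¹ - 1)
      ≤ 2 * α⁻¹ * specNorm A * specNorm (A - Ak) := by
  have hps : (Ak * Akᵀ).PosSemidef := by
    have h := Matrix.posSemidef_self_mul_conjTranspose Ak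
    rwa [Matrix.conjTranspose_eq_transpose_of_trivial] at h
  set B := Ak * Akᵀ + α • (1 : Matrix (Fin n) (Fin n) ℝ) with hBdef
  have hBpd : B.PosDef := Matrix.PosDef.posSemidef_add hps (smul_one_posDef hα)
  have hdet : IsUnit B.det := (Matrix.isUnit_iff_isUnit_det B).mp hBpd.isUnit
  have hinv : B * B⁻¹ = 1 := Matrix.mul_nonsing_inv B hdet
  have hA0 := specNorm_nonneg A
  have hAAk0 := specNorm_nonneg (A - Ak)
  have hid : (A * Aᵀ + α • (1 : Matrix (Fin n) (Fin n) ℝ)) * B⁻¹ - 1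
      = (A * (A - Ak)ᵀ + (A - Ak) * Akᵀ) * B⁻¹ := by
    have h1 : A * (A - Ak)ᵀ + (A - Ak) * Akᵀ
        = (A * Aᵀ + α • (1 : Matrix (Fin n) (Fin n) ℝ)) - B := by
      rw [hBdef, Matrix.transpose_sub, Matrix.mul_sub, Matrix.sub_mul]
      abel
    rw [h1, Matrix.sub_mul, hinv]
  rw [hid]
  have hBi : specNorm B⁻¹ ≤ α⁻¹ := specNorm_inv_le hps hα
  have h2 : specNorm (A * (A - Ak)ᵀ) ≤ specNorm A * specNorm (A - Ak) := by
    calc specNorm (A * (A - Ak)ᵀ) ≤ specNorm A * specNorm (A - Ak)ᵀ := specNorm_mul_le _ _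
      _ = specNorm A * specNorm (A - Ak) := by rw [specNorm_transpose]
  have hAkle : specNorm Ak ≤ specNorm A := by
    rw [hAk]
    calc specNorm (P * A) ≤ specNorm P * specNorm A := specNorm_mul_le _ _
      _ ≤ 1 * specNorm A :=
        mul_le_mul_of_nonneg_right (specNorm_proj_le_one hPsym hPidem) hA0
      _ = specNorm A := one_mul _
  have h3 : specNorm ((A - Ak) * Akᵀ) ≤ specNorm (A - Ak) * specNorm A := by
    calc specNorm ((A - Ak) * Akᵀ) ≤ specNorm (A - Ak) * specNorm Akᵀ := specNorm_mul_le _ _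
      _ = specNorm (A - Ak) * specNorm Ak := by rw [specNorm_transpose]
      _ ≤ specNorm (A - Ak) * specNorm A := mul_le_mul_of_nonneg_left hAkle hAAk0
  calc specNorm ((A * (A - Ak)ᵀ + (A - Ak) * Akᵀ) * B⁻¹)
      ≤ specNorm (A * (A - Ak)ᵀ + (A - Ak) * Akᵀ) * specNorm B⁻¹ := specNorm_mul_le _ _
    _ ≤ (specNorm A * specNorm (A - Ak) + specNorm (A - Ak) * specNorm A) * α⁻¹ := by
        apply mul_le_mul (le_trans (specNorm_add_le _ _) (by linarith)) hBi
          (specNorm_nonneg _) (by positivity)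
    _ = 2 * α⁻¹ * specNorm A * specNorm (A - Ak) := by ring
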